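/- arXiv:2407.18885 — 2 statements merged into one kernel-verified Lean document; each statement's English description precedes it below -/
import Mathlib

section
/- Let y ∈ ℝ^d, let Σ and S_t(θ) be positive definite d×d matrices, let θ have prior density p(θ), and let the simulation output vector η(θ) given data D_t be distributed N(μ_t(θ), S_t(θ)). Define the Gaussian likelihood p(y|θ) = f_N(y; η(θ), Σ). Then E[p(y|θ)p(θ) | D_t] = f_N(y; μ_t(θ), Σ + S_t(θ)) p(θ) and Var[p(y|θ)p(θ) | D_t] = [ (2^d π^{d/2} |Σ|^{1/2})^{-1} f_N(y; μ_t(θ), (1/2)Σ + S_t(θ)) − (f_N(y; μ_t(θ), Σ + S_t(θ)))² ] p(θ)². -/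
open Matrix MeasureTheory

/-- Multivariate normal density on ℝ^d: `fN d C b a` is the density with mean `b`
and covariance `C`, evaluated at `a`. -/
noncomputable def fN (d : ℕ) (C : Matrix (Fin d) (Fin d) ℝ) (b a : Fin d → ℝ) : ℝ :=
  (2 * Real.pi) ^ (-(d : ℝ) / 2) * C.det ^ (-(1 : ℝ) / 2) *
    Real.exp (-(1 / 2) * ((a - b) ⬝ᵥ (C⁻¹ *ᵥ (a - b))))

lemma dot_symm {d : ℕ} {M : Matrix (Fin d) (Fin d) ℝ} (hM : Mᵀ = M) (u v : Fin d → ℝ) :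
    u ⬝ᵥ (M *ᵥ v) = v ⬝ᵥ (M *ᵥ u) := by
  rw [dotProduct_mulVec, ← hM, vecMul_transpose, dotProduct_comm, hM]

lemma posdef_symm {d : ℕ} {M : Matrix (Fin d) (Fin d) ℝ} (hM : M.PosDef) : Mᵀ = M := by
  ext i j
  simpa [Matrix.conjTranspose_apply] using congrFun (congrFun hM.isHermitian.eq i) j

lemma mdot {d : ℕ} (M N : Matrix (Fin d) (Fin d) ℝ) (u v : Fin d → ℝ) :
    (M *ᵥ u) ⬝ᵥ (N *ᵥ v) = u ⬝ᵥ ((Mᵀ * N) *ᵥ v) := by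
  rw [← vecMul_transpose, ← dotProduct_mulVec, mulVec_mulVec]

open scoped MatrixOrder in
lemma gauss_integral {d : ℕ} (M : Matrix (Fin d) (Fin d) ℝ) (hM : M.PosDef) :
    ∫ x : Fin d → ℝ, Real.exp (-(1/2) * (x ⬝ᵥ (M *ᵥ x))) =
      (2 * Real.pi) ^ ((d : ℝ) / 2) * M.det ^ (-(1 : ℝ) / 2) := by
  classical
  set R := CFC.sqrt M with hRdef
  have hRps : R.PosSemidef := (CFC.sqrt_nonneg M).posSemidef
  have hRsym : Rᵀ = R := by
    ext i j
    simpa [Matrix.conjTranspose_apply] using congrFun (congrFun hRps.1.eq i) j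
  have hRR : R * R = M := CFC.sqrt_mul_sqrt_self M hM.posSemidef.nonneg
  have hdet2 : R.det * R.det = M.det := by rw [← det_mul, hRR]
  have hdetnn : 0 ≤ R.det := by
    have h := hRps.1.det_eq_prod_eigenvalues
    rw [h]
    exact Finset.prod_nonneg fun i _ => hRps.eigenvalues_nonneg i
  have hMdetpos : 0 < M.det := hM.det_pos
  have hdetpos : 0 < R.det := by
    rcases hdetnn.lt_or_eq with h | h
    · exact h
    · exfalso; rw [← h] at hdet2; simp at hdet2; linarith [hdet2 ▸ hMdetpos]
  -- quadratic form as squared norm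
  have hquad : ∀ x : Fin d → ℝ, x ⬝ᵥ (M *ᵥ x) = (R *ᵥ x) ⬝ᵥ (R *ᵥ x) := by
    intro x
    rw [← hRR, ← mulVec_mulVec, dot_symm hRsym x (R *ᵥ x)]
  simp_rw [hquad]
  -- change of variables
  set f : (Fin d → ℝ) →ₗ[ℝ] (Fin d → ℝ) := Matrix.toLin' R with hfdef
  have hfdet : LinearMap.det f = R.det := LinearMap.det_toLin' R
  have hfdet' : LinearMap.det f ≠ 0 := by rw [hfdet]; exact hdetpos.ne'
  have hmap : Measure.map f volume = ENNReal.ofReal |R.det|⁻¹ • volume := by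
    rw [Real.map_linearMap_volume_pi_eq_smul_volume_pi hfdet', hfdet, abs_inv]
  have hfc : Continuous f := f.continuous_of_finiteDimensional
  have hgc : Continuous fun y : Fin d → ℝ => Real.exp (-(1/2) * (y ⬝ᵥ y)) := by
    apply Real.continuous_exp.comp
    apply Continuous.mul continuous_const
    unfold dotProduct
    exact continuous_finset_sum _ fun i _ => ((continuous_apply i).mul (continuous_apply i))
  have key : ∫ x : Fin d → ℝ, Real.exp (-(1/2) * ((R *ᵥ x) ⬝ᵥ (R *ᵥ x))) =
      |R.det|⁻¹ * ∫ y : Fin d → ℝ, Real.exp (-(1/2) * (y ⬝ᵥ y)) := by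
    have h1 : ∀ x, R *ᵥ x = f x := fun x => (Matrix.toLin'_apply R x).symm
    simp_rw [h1]
    rw [← integral_map hfc.measurable.aemeasurable hgc.aestronglyMeasurable, hmap,
      integral_smul_measure]
    simp [ENNReal.toReal_ofReal (by positivity : (0:ℝ) ≤ |R.det|⁻¹)]
  rw [key]
  -- compute the standard Gaussian integral
  have hstd : ∫ y : Fin d → ℝ, Real.exp (-(1/2) * (y ⬝ᵥ y)) = (2 * Real.pi) ^ ((d : ℝ) / 2) := by
    have h1 : ∀ y : Fin d → ℝ, Real.exp (-(1/2) * (y ⬝ᵥ y)) =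
        ∏ i, Real.exp (-(1/2) * (y i) ^ 2) := by
      intro y
      rw [← Real.exp_sum]
      congr 1
      unfold dotProduct
      rw [Finset.mul_sum]
      congr 1; ext i; ring
    simp_rw [h1]
    rw [MeasureTheory.integral_fintype_prod_volume_eq_pow (ι := Fin d)
      (fun t : ℝ => Real.exp (-(1/2) * t ^ 2))]
    rw [integral_gaussian]
    have : Real.pi / (1/2) = 2 * Real.pi := by ring
    rw [this, Fintype.card_fin, Real.sqrt_eq_rpow, ← Real.rpow_natCast ((2*Real.pi) ^ ((1:ℝ)/2)) d,
      ← Real.rpow_mul (by positivity)]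
    norm_num
    congr 1
    ring
  rw [hstd]
  have hRM : R.det = M.det ^ ((1:ℝ)/2) := by
    rw [← Real.sqrt_eq_rpow, ← hdet2, Real.sqrt_mul_self hdetnn]
  rw [abs_of_pos hdetpos, hRM, ← Real.rpow_neg_one, ← Real.rpow_mul hMdetpos.le]
  ring_nf

lemma half_posdef {d : ℕ} {V : Matrix (Fin d) (Fin d) ℝ} (hV : V.PosDef) :
    ((1/2 : ℝ) • V).PosDef := by
  refine ⟨?_, fun x hx => ?_⟩
  · show ((1/2 : ℝ) • V)ᴴ = _
    rw [Matrix.conjTranspose_smul, hV.isHermitian.eq, star_trivial]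
  · exact (hV.smul (by norm_num : (0:ℝ) < 1/2)).2 hx

lemma fN_sq {d : ℕ} (V : Matrix (Fin d) (Fin d) ℝ) (hV : V.PosDef) (y η : Fin d → ℝ) :
    (fN d V η y) ^ 2
      = ((2 : ℝ) ^ d * Real.pi ^ ((d : ℝ) / 2) * V.det ^ ((1 : ℝ) / 2))⁻¹
          * fN d ((1/2 : ℝ) • V) η y := by
  have haV : 0 < V.det := hV.det_pos
  have hπ : (0:ℝ) < Real.pi := Real.pi_pos
  have h2π : (0:ℝ) < 2 * Real.pi := by positivity
  have uV : IsUnit V.det := haV.ne'.isUnit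
  have hinv : ((1/2 : ℝ) • V)⁻¹ = (2 : ℝ) • V⁻¹ := by
    apply Matrix.inv_eq_right_inv
    rw [smul_mul_smul_comm, Matrix.mul_nonsing_inv V uV]
    norm_num
  have hdet : ((1/2 : ℝ) • V).det = (1/2 : ℝ) ^ d * V.det := by
    rw [Matrix.det_smul, Fintype.card_fin]
  -- constant identity
  have h12 : ((1/2:ℝ)) ^ d = (2:ℝ) ^ (-(d:ℝ)) := by
    rw [← Real.rpow_natCast (1/2:ℝ) d, one_div, Real.inv_rpow (by norm_num),
      ← Real.rpow_neg (by norm_num)]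
  have e3 : ((1/2:ℝ) ^ d * V.det) ^ (-(1:ℝ)/2)
      = (2:ℝ) ^ ((d:ℝ)/2) * V.det ^ (-(1:ℝ)/2) := by
    rw [h12, Real.mul_rpow (by positivity) haV.le, ← Real.rpow_mul (by norm_num : (0:ℝ) ≤ 2),
      show (-(d:ℝ)) * (-(1:ℝ)/2) = (d:ℝ)/2 by ring]
  have e4 : ((2:ℝ) ^ d * Real.pi ^ ((d:ℝ)/2) * V.det ^ ((1:ℝ)/2))⁻¹
      = (2:ℝ) ^ (-(d:ℝ)) * Real.pi ^ (-(d:ℝ)/2) * V.det ^ (-(1:ℝ)/2) := by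
    rw [mul_inv, mul_inv, ← Real.rpow_natCast (2:ℝ) d,
      ← Real.rpow_neg (by norm_num : (0:ℝ) ≤ 2), ← Real.rpow_neg hπ.le,
      ← Real.rpow_neg haV.le]
    simp [neg_div]
  have e5 : (2 * Real.pi) ^ (-(d:ℝ)/2) = (2:ℝ) ^ (-(d:ℝ)/2) * Real.pi ^ (-(d:ℝ)/2) :=
    Real.mul_rpow (by norm_num) hπ.le
  have hconst : ((2 * Real.pi) ^ (-(d:ℝ)/2) * V.det ^ (-(1:ℝ)/2))
        * ((2 * Real.pi) ^ (-(d:ℝ)/2) * V.det ^ (-(1:ℝ)/2))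
      = ((2:ℝ) ^ d * Real.pi ^ ((d:ℝ)/2) * V.det ^ ((1:ℝ)/2))⁻¹
        * ((2 * Real.pi) ^ (-(d:ℝ)/2) * ((1/2:ℝ) ^ d * V.det) ^ (-(1:ℝ)/2)) := by
    rw [e3, e4, e5]
    have h22 : (2:ℝ) ^ (-(d:ℝ)/2) * (2:ℝ) ^ (-(d:ℝ)/2) = (2:ℝ) ^ (-(d:ℝ)) := by
      rw [← Real.rpow_add (by norm_num : (0:ℝ) < 2)]
      congr 1
      ring
    have h23 : (2:ℝ) ^ (-(d:ℝ)/2) * (2:ℝ) ^ ((d:ℝ)/2) = 1 := by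
      rw [← Real.rpow_add (by norm_num : (0:ℝ) < 2), show -(d:ℝ)/2 + (d:ℝ)/2 = 0 by ring,
        Real.rpow_zero]
    linear_combination (Real.pi ^ (-(d:ℝ)/2) * Real.pi ^ (-(d:ℝ)/2)
        * (V.det ^ (-(1:ℝ)/2) * V.det ^ (-(1:ℝ)/2))) * h22
      - (Real.pi ^ (-(d:ℝ)/2) * Real.pi ^ (-(d:ℝ)/2)
        * (V.det ^ (-(1:ℝ)/2) * V.det ^ (-(1:ℝ)/2)) * (2:ℝ) ^ (-(d:ℝ))) * h23
  -- exponential part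
  have hq : ∀ z : Fin d → ℝ,
      -(1/2 : ℝ) * (z ⬝ᵥ (((1/2 : ℝ) • V)⁻¹ *ᵥ z))
        = -(1/2 : ℝ) * (z ⬝ᵥ (V⁻¹ *ᵥ z)) + -(1/2 : ℝ) * (z ⬝ᵥ (V⁻¹ *ᵥ z)) := by
    intro z
    rw [hinv, Matrix.smul_mulVec, dotProduct_smul, smul_eq_mul]
    ring
  unfold fN
  rw [hdet, hq (y - η), Real.exp_add]
  calc ((2 * Real.pi) ^ (-(d:ℝ)/2) * V.det ^ (-(1:ℝ)/2)
          * Real.exp (-(1/2) * ((y - η) ⬝ᵥ (V⁻¹ *ᵥ (y - η))))) ^ 2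
      = (((2 * Real.pi) ^ (-(d:ℝ)/2) * V.det ^ (-(1:ℝ)/2))
          * ((2 * Real.pi) ^ (-(d:ℝ)/2) * V.det ^ (-(1:ℝ)/2)))
        * (Real.exp (-(1/2) * ((y - η) ⬝ᵥ (V⁻¹ *ᵥ (y - η))))
          * Real.exp (-(1/2) * ((y - η) ⬝ᵥ (V⁻¹ *ᵥ (y - η))))) := by ring
    _ = _ := by rw [hconst]; ring

lemma fN_conv {d : ℕ} (V St : Matrix (Fin d) (Fin d) ℝ) (hV : V.PosDef) (hSt : St.PosDef)
    (y μ : Fin d → ℝ) :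
    ∫ η : Fin d → ℝ, fN d V η y * fN d St μ η = fN d (V + St) μ y := by
  classical
  have hVSt : (V + St).PosDef := hV.add hSt
  set P := V⁻¹ with hPdef
  set Q := St⁻¹ with hQdef
  set A := P + Q with hAdef
  set B := (V + St)⁻¹ with hBdef
  have hP : P.PosDef := hV.inv
  have hQ : Q.PosDef := hSt.inv
  have hA : A.PosDef := hP.add hQ
  have hBpos : B.PosDef := hVSt.inv
  have sP : Pᵀ = P := posdef_symm hP
  have sQ : Qᵀ = Q := posdef_symm hQ
  have sA : Aᵀ = A := posdef_symm hA
  have sB : Bᵀ = B := posdef_symm hBpos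
  have uV : IsUnit V.det := hV.det_pos.ne'.isUnit
  have uSt : IsUnit St.det := hSt.det_pos.ne'.isUnit
  have uA : IsUnit A.det := hA.det_pos.ne'.isUnit
  have uVSt : IsUnit (V + St).det := hVSt.det_pos.ne'.isUnit
  have hPV : P * V = 1 := Matrix.nonsing_inv_mul V uV
  have hVP : V * P = 1 := Matrix.mul_nonsing_inv V uV
  have hQSt : Q * St = 1 := Matrix.nonsing_inv_mul St uSt
  have hStQ : St * Q = 1 := Matrix.mul_nonsing_inv St uSt
  have hPinv : P⁻¹ = V := Matrix.nonsing_inv_nonsing_inv V uV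
  have hQinv : Q⁻¹ = St := Matrix.nonsing_inv_nonsing_inv St uSt
  have hVStB : (V + St) * B = 1 := Matrix.mul_nonsing_inv _ uVSt
  have hAeq : A = P * (V + St) * Q := by
    rw [Matrix.mul_add, hPV, Matrix.add_mul, Matrix.one_mul, Matrix.mul_assoc, hStQ,
      Matrix.mul_one]
    rw [hAdef]; abel
  have hAeq' : A = Q * (V + St) * P := by
    rw [Matrix.mul_add, hQSt, Matrix.add_mul, Matrix.one_mul, Matrix.mul_assoc, hVP,
      Matrix.mul_one]
    rw [hAdef]; abel
  have hAinv1 : A⁻¹ = St * (B * V) := by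
    rw [hAeq, Matrix.mul_inv_rev, Matrix.mul_inv_rev, hQinv, hPinv]
  have hAinv2 : A⁻¹ = V * (B * St) := by
    rw [hAeq', Matrix.mul_inv_rev, Matrix.mul_inv_rev, hQinv, hPinv]
  have hPAQ : P * A⁻¹ * Q = B := by
    rw [hAinv2, Matrix.mul_assoc, Matrix.mul_assoc, Matrix.mul_assoc, hStQ, Matrix.mul_one,
      ← Matrix.mul_assoc, hPV, Matrix.one_mul]
  have hQAP : Q * A⁻¹ * P = B := by
    rw [hAinv1, Matrix.mul_assoc, Matrix.mul_assoc, Matrix.mul_assoc, hVP, Matrix.mul_one,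
      ← Matrix.mul_assoc, hQSt, Matrix.one_mul]
  have hPAP : P * A⁻¹ * P = P - B := by
    have h1 : P * A⁻¹ * P = P * (St * B) := by
      rw [hAinv1, Matrix.mul_assoc, Matrix.mul_assoc, Matrix.mul_assoc, hVP, Matrix.mul_one]
    have h2 : P = B + P * (St * B) := by
      calc P = P * ((V + St) * B) := by rw [hVStB, Matrix.mul_one]
      _ = P * (V * B) + P * (St * B) := by rw [Matrix.add_mul, Matrix.mul_add]
      _ = B + P * (St * B) := by rw [← Matrix.mul_assoc, hPV, Matrix.one_mul]
    rw [h1, eq_sub_iff_add_eq, add_comm]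
    exact h2.symm
  have hQAQ : Q * A⁻¹ * Q = Q - B := by
    have h1 : Q * A⁻¹ * Q = Q * (V * B) := by
      rw [hAinv2, Matrix.mul_assoc, Matrix.mul_assoc, Matrix.mul_assoc, hStQ, Matrix.mul_one]
    have h2 : Q = B + Q * (V * B) := by
      calc Q = Q * ((V + St) * B) := by rw [hVStB, Matrix.mul_one]
      _ = Q * (V * B) + Q * (St * B) := by rw [Matrix.add_mul, Matrix.mul_add]
      _ = B + Q * (V * B) := by rw [← Matrix.mul_assoc Q St B, hQSt, Matrix.one_mul, add_comm]
    rw [h1, eq_sub_iff_add_eq, add_comm]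
    exact h2.symm
  set w : Fin d → ℝ := P *ᵥ y + Q *ᵥ μ with hwdef
  set m : Fin d → ℝ := A⁻¹ *ᵥ w with hmdef
  have hAm : A *ᵥ m = w := by
    rw [hmdef, mulVec_mulVec, Matrix.mul_nonsing_inv _ uA, one_mulVec]
  -- the quadratic-form identity (completing the square)
  have hE : ∀ η : Fin d → ℝ,
      (y - η) ⬝ᵥ (P *ᵥ (y - η)) + (η - μ) ⬝ᵥ (Q *ᵥ (η - μ))
        = (y - μ) ⬝ᵥ (B *ᵥ (y - μ)) + (η - m) ⬝ᵥ (A *ᵥ (η - m)) := by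
    intro η
    have e1 : (y - η) ⬝ᵥ (P *ᵥ (y - η))
        = y ⬝ᵥ (P *ᵥ y) - 2 * (η ⬝ᵥ (P *ᵥ y)) + η ⬝ᵥ (P *ᵥ η) := by
      rw [mulVec_sub, dotProduct_sub, sub_dotProduct, sub_dotProduct, dot_symm sP y η]
      ring
    have e2 : (η - μ) ⬝ᵥ (Q *ᵥ (η - μ))
        = η ⬝ᵥ (Q *ᵥ η) - 2 * (η ⬝ᵥ (Q *ᵥ μ)) + μ ⬝ᵥ (Q *ᵥ μ) := by
      rw [mulVec_sub, dotProduct_sub, sub_dotProduct, sub_dotProduct, dot_symm sQ μ η]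
      ring
    have e3 : (y - μ) ⬝ᵥ (B *ᵥ (y - μ))
        = y ⬝ᵥ (B *ᵥ y) - 2 * (y ⬝ᵥ (B *ᵥ μ)) + μ ⬝ᵥ (B *ᵥ μ) := by
      rw [mulVec_sub, dotProduct_sub, sub_dotProduct, sub_dotProduct, dot_symm sB μ y]
      ring
    have e4 : (η - m) ⬝ᵥ (A *ᵥ (η - m))
        = η ⬝ᵥ (A *ᵥ η) - 2 * (η ⬝ᵥ (A *ᵥ m)) + m ⬝ᵥ (A *ᵥ m) := by
      rw [mulVec_sub, dotProduct_sub, sub_dotProduct, sub_dotProduct, dot_symm sA m η]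
      ring
    have e5 : η ⬝ᵥ (A *ᵥ m) = η ⬝ᵥ (P *ᵥ y) + η ⬝ᵥ (Q *ᵥ μ) := by
      rw [hAm, hwdef, dotProduct_add]
    have e6 : m ⬝ᵥ (A *ᵥ m) = w ⬝ᵥ (A⁻¹ *ᵥ w) := by
      rw [hAm, hmdef, dotProduct_comm]
    have e7 : η ⬝ᵥ (A *ᵥ η) = η ⬝ᵥ (P *ᵥ η) + η ⬝ᵥ (Q *ᵥ η) := by
      rw [hAdef, Matrix.add_mulVec, dotProduct_add]
    have t1 : (P *ᵥ y) ⬝ᵥ (A⁻¹ *ᵥ (P *ᵥ y)) = y ⬝ᵥ (P *ᵥ y) - y ⬝ᵥ (B *ᵥ y) := by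
      rw [mulVec_mulVec, mdot, sP, ← Matrix.mul_assoc, hPAP, Matrix.sub_mulVec, dotProduct_sub]
    have t2 : (P *ᵥ y) ⬝ᵥ (A⁻¹ *ᵥ (Q *ᵥ μ)) = y ⬝ᵥ (B *ᵥ μ) := by
      rw [mulVec_mulVec, mdot, sP, ← Matrix.mul_assoc, hPAQ]
    have t3 : (Q *ᵥ μ) ⬝ᵥ (A⁻¹ *ᵥ (P *ᵥ y)) = y ⬝ᵥ (B *ᵥ μ) := by
      rw [mulVec_mulVec, mdot, sQ, ← Matrix.mul_assoc, hQAP, dot_symm sB μ y]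
    have t4 : (Q *ᵥ μ) ⬝ᵥ (A⁻¹ *ᵥ (Q *ᵥ μ)) = μ ⬝ᵥ (Q *ᵥ μ) - μ ⬝ᵥ (B *ᵥ μ) := by
      rw [mulVec_mulVec, mdot, sQ, ← Matrix.mul_assoc, hQAQ, Matrix.sub_mulVec, dotProduct_sub]
    have e8 : w ⬝ᵥ (A⁻¹ *ᵥ w)
        = (y ⬝ᵥ (P *ᵥ y) - y ⬝ᵥ (B *ᵥ y)) + 2 * (y ⬝ᵥ (B *ᵥ μ))
            + (μ ⬝ᵥ (Q *ᵥ μ) - μ ⬝ᵥ (B *ᵥ μ)) := by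
      rw [hwdef, mulVec_add, add_dotProduct, dotProduct_add, dotProduct_add, t1, t2, t3, t4]
      ring
    rw [e1, e2, e3, e4, e5, e6, e7, e8]
    ring
  -- determinant identity
  have hdetAeq : A.det = (V + St).det * V.det⁻¹ * St.det⁻¹ := by
    rw [hAeq, det_mul, det_mul, hPdef, Matrix.det_nonsing_inv, hQdef, Matrix.det_nonsing_inv]
    simp only [Ring.inverse_eq_inv']
    ring
  have haA : 0 < A.det := hA.det_pos
  have haV : 0 < V.det := hV.det_pos
  have haSt : 0 < St.det := hSt.det_pos
  have haVSt : 0 < (V + St).det := hVSt.det_pos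
  have hc : V.det ^ (-(1:ℝ)/2) * St.det ^ (-(1:ℝ)/2)
      = (V + St).det ^ (-(1:ℝ)/2) * A.det ^ ((1:ℝ)/2) := by
    have h1 : A.det ^ ((1:ℝ)/2)
        = (V + St).det ^ ((1:ℝ)/2) * (V.det ^ ((1:ℝ)/2))⁻¹ * (St.det ^ ((1:ℝ)/2))⁻¹ := by
      rw [hdetAeq, Real.mul_rpow (by positivity) (by positivity),
        Real.mul_rpow (by positivity) (by positivity), Real.inv_rpow haV.le,
        Real.inv_rpow haSt.le]
    have h2 : ∀ x : ℝ, 0 < x → x ^ (-(1:ℝ)/2) = (x ^ ((1:ℝ)/2))⁻¹ := by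
      intro x hx
      rw [neg_div, Real.rpow_neg hx.le]
    rw [h1, h2 _ haV, h2 _ haSt, h2 _ haVSt]
    have hcpos : (0:ℝ) < (V + St).det ^ ((1:ℝ)/2) := Real.rpow_pos_of_pos haVSt _
    field_simp
  -- pointwise completion of the square
  have hpt : ∀ η : Fin d → ℝ, fN d V η y * fN d St μ η
      = (fN d (V + St) μ y * ((2 * Real.pi) ^ (-(d:ℝ)/2) * A.det ^ ((1:ℝ)/2)))
          * Real.exp (-(1/2) * ((η - m) ⬝ᵥ (A *ᵥ (η - m)))) := by
    intro η
    have hexp : Real.exp (-(1/2) * ((y - η) ⬝ᵥ (P *ᵥ (y - η))))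
          * Real.exp (-(1/2) * ((η - μ) ⬝ᵥ (Q *ᵥ (η - μ))))
        = Real.exp (-(1/2) * ((y - μ) ⬝ᵥ (B *ᵥ (y - μ))))
          * Real.exp (-(1/2) * ((η - m) ⬝ᵥ (A *ᵥ (η - m)))) := by
      rw [← Real.exp_add, ← Real.exp_add, ← mul_add, ← mul_add, hE η]
    unfold fN
    rw [← hPdef, ← hQdef, ← hBdef]
    calc (2 * Real.pi) ^ (-(d:ℝ)/2) * V.det ^ (-(1:ℝ)/2)
            * Real.exp (-(1/2) * ((y - η) ⬝ᵥ (P *ᵥ (y - η))))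
          * ((2 * Real.pi) ^ (-(d:ℝ)/2) * St.det ^ (-(1:ℝ)/2)
            * Real.exp (-(1/2) * ((η - μ) ⬝ᵥ (Q *ᵥ (η - μ)))))
        = (2 * Real.pi) ^ (-(d:ℝ)/2) * (2 * Real.pi) ^ (-(d:ℝ)/2)
            * (V.det ^ (-(1:ℝ)/2) * St.det ^ (-(1:ℝ)/2))
            * (Real.exp (-(1/2) * ((y - η) ⬝ᵥ (P *ᵥ (y - η))))
              * Real.exp (-(1/2) * ((η - μ) ⬝ᵥ (Q *ᵥ (η - μ))))) := by ring
      _ = (2 * Real.pi) ^ (-(d:ℝ)/2) * (2 * Real.pi) ^ (-(d:ℝ)/2)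
            * ((V + St).det ^ (-(1:ℝ)/2) * A.det ^ ((1:ℝ)/2))
            * (Real.exp (-(1/2) * ((y - μ) ⬝ᵥ (B *ᵥ (y - μ))))
              * Real.exp (-(1/2) * ((η - m) ⬝ᵥ (A *ᵥ (η - m))))) := by rw [hc, hexp]
      _ = _ := by ring
  simp_rw [hpt]
  rw [MeasureTheory.integral_const_mul]
  have htrans : (∫ η : Fin d → ℝ, Real.exp (-(1/2) * ((η - m) ⬝ᵥ (A *ᵥ (η - m)))))
      = ∫ z : Fin d → ℝ, Real.exp (-(1/2) * (z ⬝ᵥ (A *ᵥ z))) :=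
    MeasureTheory.integral_sub_right_eq_self
      (fun z : Fin d → ℝ => Real.exp (-(1/2) * (z ⬝ᵥ (A *ᵥ z)))) m
  rw [htrans, gauss_integral A hA]
  have c1 : (2 * Real.pi) ^ (-(d:ℝ)/2) * (2 * Real.pi) ^ ((d:ℝ)/2) = 1 := by
    rw [← Real.rpow_add (by positivity), show -(d:ℝ)/2 + (d:ℝ)/2 = 0 by ring,
      Real.rpow_zero]
  have c2 : A.det ^ ((1:ℝ)/2) * A.det ^ (-(1:ℝ)/2) = 1 := by
    rw [← Real.rpow_add haA, show (1:ℝ)/2 + -(1:ℝ)/2 = 0 by ring, Real.rpow_zero]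
  calc fN d (V + St) μ y * ((2 * Real.pi) ^ (-(d:ℝ)/2) * A.det ^ ((1:ℝ)/2))
        * ((2 * Real.pi) ^ ((d:ℝ)/2) * A.det ^ (-(1:ℝ)/2))
      = fN d (V + St) μ y * (((2 * Real.pi) ^ (-(d:ℝ)/2) * (2 * Real.pi) ^ ((d:ℝ)/2))
          * (A.det ^ ((1:ℝ)/2) * A.det ^ (-(1:ℝ)/2))) := by ring
    _ = fN d (V + St) μ y := by rw [c1, c2]; ring

/-- Lemma 3.1 of the paper: mean and variance of the unnormalized posterior
`p̃(θ|y) = p(y|θ)p(θ)` where `p(y|θ) = f_N(y; η(θ), Σ)` and the emulator gives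
`η(θ) ~ N(μ_t(θ), S_t(θ))` (expectations written as integrals against the emulator
density). -/
theorem lemma_3_1 (d : ℕ) (V St : Matrix (Fin d) (Fin d) ℝ)
    (hV : V.PosDef) (hSt : St.PosDef) (y μt : Fin d → ℝ) (pθ : ℝ) :
    (∫ η : Fin d → ℝ, fN d V η y * pθ * fN d St μt η) =
        fN d (V + St) μt y * pθ ∧
      (∫ η : Fin d → ℝ, (fN d V η y * pθ) ^ 2 * fN d St μt η) -
          (∫ η : Fin d → ℝ, fN d V η y * pθ * fN d St μt η) ^ 2 =
        (((2 : ℝ) ^ d * Real.pi ^ ((d : ℝ) / 2) * V.det ^ ((1 : ℝ) / 2))⁻¹ *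
            fN d ((1 / 2 : ℝ) • V + St) μt y -
          (fN d (V + St) μt y) ^ 2) * pθ ^ 2 := by
  have h1 : (∫ η : Fin d → ℝ, fN d V η y * pθ * fN d St μt η)
      = fN d (V + St) μt y * pθ := by
    have hpt : ∀ η : Fin d → ℝ, fN d V η y * pθ * fN d St μt η
        = pθ * (fN d V η y * fN d St μt η) := fun η => by ring
    simp_rw [hpt]
    rw [MeasureTheory.integral_const_mul, fN_conv V St hV hSt y μt]
    ring
  refine ⟨h1, ?_⟩
  have hhalf : ((1/2 : ℝ) • V).PosDef := half_posdef hV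
  have h2 : (∫ η : Fin d → ℝ, (fN d V η y * pθ) ^ 2 * fN d St μt η)
      = (pθ ^ 2 * ((2:ℝ) ^ d * Real.pi ^ ((d:ℝ)/2) * V.det ^ ((1:ℝ)/2))⁻¹)
          * fN d ((1/2 : ℝ) • V + St) μt y := by
    have hpt : ∀ η : Fin d → ℝ, (fN d V η y * pθ) ^ 2 * fN d St μt η
        = (pθ ^ 2 * ((2:ℝ) ^ d * Real.pi ^ ((d:ℝ)/2) * V.det ^ ((1:ℝ)/2))⁻¹)
            * (fN d ((1/2 : ℝ) • V) η y * fN d St μt η) := by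
      intro η
      have h := fN_sq V hV y η
      linear_combination (pθ ^ 2 * fN d St μt η) * h
    simp_rw [hpt]
    rw [MeasureTheory.integral_const_mul, fN_conv _ St hhalf hSt y μt]
  rw [h1, h2]
  ring
end

section
/- Let Σ, S be positive definite d×d matrices and let Φ be symmetric positive semidefinite with S − Φ positive semidefinite. Then for any y, μ ∈ ℝ^d, (2^d π^{d/2}|Σ + S − Φ|^{1/2})^{-1} f_N(y; μ, (1/2)(Σ + S + Φ)) ≤ (2^d π^{d/2}|Σ|^{1/2})^{-1} f_N(y; μ, (1/2)Σ + S). That is, the expected look-ahead variance of Lemma 3.2 is nonnegative. -/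
open Matrix MeasureTheory

set_option linter.unusedSectionVars false
set_option maxHeartbeats 1000000

section Aux

variable {n : Type*} [Fintype n] [DecidableEq n]

open scoped MatrixOrder in
noncomputable def Matrix.PosSemidef.sqrt {A : Matrix n n ℝ} (_ : A.PosSemidef) : Matrix n n ℝ :=
  CFC.sqrt A

open scoped MatrixOrder in
lemma Matrix.PosSemidef.posSemidef_sqrt {A : Matrix n n ℝ} (hA : A.PosSemidef) :
    hA.sqrt.PosSemidef :=
  (CFC.sqrt_nonneg A).posSemidef

open scoped MatrixOrder in
lemma Matrix.PosSemidef.sqrt_mul_self {A : Matrix n n ℝ} (hA : A.PosSemidef) :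
    hA.sqrt * hA.sqrt = A :=
  CFC.sqrt_mul_sqrt_self A hA.nonneg

lemma one_le_det_one_add {G : Matrix n n ℝ} (hG : G.PosSemidef) : 1 ≤ (1 + G).det := by
  have hH := hG.isHermitian
  set U : Matrix n n ℝ := (Matrix.IsHermitian.eigenvectorUnitary hH : Matrix n n ℝ) with hUdef
  have hU : U * star U = 1 :=
    Matrix.mem_unitaryGroup_iff.mp (Matrix.IsHermitian.eigenvectorUnitary hH).2
  have hspec := hH.spectral_theorem
  rw [Unitary.conjStarAlgAut_apply, ← hUdef] at hspec
  have hnn : ∀ i, 0 ≤ hH.eigenvalues i := hG.eigenvalues_nonneg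
  have h1 : (1 : Matrix n n ℝ) + G
      = U * (1 + diagonal (RCLike.ofReal ∘ hH.eigenvalues)) * star U := by
    rw [Matrix.mul_add, Matrix.add_mul, Matrix.mul_one, hU, ← hspec]
  rw [h1, det_mul, det_mul, mul_comm, ← mul_assoc, ← det_mul,
    (Matrix.mem_unitaryGroup_iff').mp (Matrix.IsHermitian.eigenvectorUnitary hH).2, det_one,
    one_mul]
  have : (1 : Matrix n n ℝ) + diagonal (RCLike.ofReal ∘ hH.eigenvalues)
      = diagonal (fun i => 1 + hH.eigenvalues i) := by
    rw [← diagonal_one, diagonal_add]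
    rfl
  rw [this, det_diagonal]
  have h := Finset.prod_le_prod (s := Finset.univ) (f := fun _ : n => (1:ℝ))
    (g := fun i => 1 + hH.eigenvalues i) (fun i _ => zero_le_one)
    (fun i _ => by have := hnn i; show (1:ℝ) ≤ 1 + hH.eigenvalues i; linarith)
  simpa using h

lemma sqrt_det_isUnit {X : Matrix n n ℝ} (hX : X.PosDef) :
    IsUnit (hX.posSemidef.sqrt).det := by
  have h : (hX.posSemidef.sqrt).det * (hX.posSemidef.sqrt).det = X.det := by
    rw [← det_mul, hX.posSemidef.sqrt_mul_self]
  have hd := hX.det_pos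
  refine isUnit_iff_ne_zero.mpr fun h0 => ?_
  rw [h0, mul_zero] at h
  exact hd.ne h

lemma posDef_of_posSemidef_isUnit {A : Matrix n n ℝ} (hA : A.PosSemidef)
    (h : IsUnit A.det) : A.PosDef := by
  refine PosDef.of_dotProduct_mulVec_pos hA.isHermitian fun x hx => ?_
  rcases lt_or_eq_of_le (hA.dotProduct_mulVec_nonneg x) with h' | h'
  · exact h'
  · exfalso
    apply hx
    have h0 : A *ᵥ x = 0 := (hA.dotProduct_mulVec_zero_iff x).mp h'.symm
    have := congrArg (fun v => A⁻¹ *ᵥ v) h0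
    simpa [Matrix.mulVec_mulVec, Matrix.nonsing_inv_mul _ h] using this

lemma posDef_conj {A B : Matrix n n ℝ} (hA : A.PosDef) (hB : B.IsHermitian)
    (h : IsUnit B.det) : (B * A * B).PosDef := by
  apply posDef_of_posSemidef_isUnit
  · have := hA.posSemidef.mul_mul_conjTranspose_same B
    rwa [hB.eq] at this
  · rw [det_mul, det_mul]
    exact (h.mul (isUnit_iff_ne_zero.mpr hA.det_pos.ne')).mul h

lemma psd_conj {A B : Matrix n n ℝ} (hA : A.PosSemidef) (hB : B.IsHermitian) :
    (B * A * B).PosSemidef := by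
  have := hA.mul_mul_conjTranspose_same B
  rwa [hB.eq] at this

lemma det_le_det_add {X P : Matrix n n ℝ} (hX : X.PosDef) (hP : P.PosSemidef) :
    X.det ≤ (X + P).det := by
  set W := hX.posSemidef.sqrt with hWdef
  have hWH : W.IsHermitian := hX.posSemidef.posSemidef_sqrt.isHermitian
  have hWW : W * W = X := hX.posSemidef.sqrt_mul_self
  have hdet : IsUnit W.det := sqrt_det_isUnit hX
  have hWiH : W⁻¹.IsHermitian := hWH.inv
  have hG : (W⁻¹ * P * W⁻¹).PosSemidef := psd_conj hP hWiH
  have key : X + P = W * (1 + W⁻¹ * P * W⁻¹) * W := by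
    rw [Matrix.mul_add, Matrix.add_mul, Matrix.mul_one, hWW]
    congr 1
    rw [← Matrix.mul_assoc, ← Matrix.mul_assoc, Matrix.mul_nonsing_inv _ hdet, Matrix.one_mul,
      Matrix.mul_assoc, Matrix.nonsing_inv_mul _ hdet, Matrix.mul_one]
  have h1 : 1 ≤ (1 + W⁻¹ * P * W⁻¹).det := one_le_det_one_add hG
  have hXdet := hX.det_pos
  calc X.det = X.det * 1 := (mul_one _).symm
    _ ≤ X.det * (1 + W⁻¹ * P * W⁻¹).det := mul_le_mul_of_nonneg_left h1 hXdet.le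
    _ = (X + P).det := by
        rw [key, det_mul, det_mul, ← hWW, det_mul]
        ring

lemma inv_sub_inv_posSemidef {A B : Matrix n n ℝ} (hA : A.PosDef) (hB : B.PosDef)
    (hAB : (A - B).PosSemidef) : (B⁻¹ - A⁻¹).PosSemidef := by
  set C := hB.posSemidef.sqrt with hCdef
  have hCH : C.IsHermitian := hB.posSemidef.posSemidef_sqrt.isHermitian
  have hCC : C * C = B := hB.posSemidef.sqrt_mul_self
  have hCdetU : IsUnit C.det := sqrt_det_isUnit hB
  have hCiH : C⁻¹.IsHermitian := hCH.inv
  have hCidet : IsUnit C⁻¹.det := C.isUnit_nonsing_inv_det hCdetU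
  have hc1 : ∀ X : Matrix n n ℝ, C⁻¹ * (C * X) = X := fun X => by
    rw [← Matrix.mul_assoc, Matrix.nonsing_inv_mul _ hCdetU, Matrix.one_mul]
  have hc2 : ∀ X : Matrix n n ℝ, C * (C⁻¹ * X) = X := fun X => by
    rw [← Matrix.mul_assoc, Matrix.mul_nonsing_inv _ hCdetU, Matrix.one_mul]
  set Z := C⁻¹ * A * C⁻¹ with hZdef
  have hZ : Z.PosDef := posDef_conj hA hCiH hCidet
  have hZdetU : IsUnit Z.det := isUnit_iff_ne_zero.mpr hZ.det_pos.ne'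
  have hZ1 : (Z - 1).PosSemidef := by
    have h : Z - 1 = C⁻¹ * (A - B) * C⁻¹ := by
      rw [Matrix.mul_sub, Matrix.sub_mul, hZdef, ← hCC]
      simp [Matrix.mul_assoc, hc1, Matrix.nonsing_inv_mul _ hCdetU,
        Matrix.mul_nonsing_inv _ hCdetU]
    rw [h]
    exact psd_conj hAB hCiH
  have hZinv : Z⁻¹.PosDef := hZ.inv
  set W := hZinv.posSemidef.sqrt with hWdef
  have hWH : W.IsHermitian := hZinv.posSemidef.posSemidef_sqrt.isHermitian
  have hWW : W * W = Z⁻¹ := hZinv.posSemidef.sqrt_mul_self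
  have hWdetU : IsUnit W.det := sqrt_det_isUnit hZinv
  have hZW : W * Z = Z * W := by
    have hZeq : Z = W⁻¹ * W⁻¹ := by
      rw [← Matrix.mul_inv_rev, hWW, Matrix.nonsing_inv_nonsing_inv _ hZdetU]
    rw [hZeq, ← Matrix.mul_assoc, Matrix.mul_nonsing_inv _ hWdetU, Matrix.one_mul,
      Matrix.mul_assoc, Matrix.nonsing_inv_mul _ hWdetU, Matrix.mul_one]
  have h1Z : (1 : Matrix n n ℝ) - Z⁻¹ = W * (Z - 1) * W := by
    rw [Matrix.mul_sub, Matrix.mul_one, Matrix.sub_mul, hZW, Matrix.mul_assoc, hWW,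
      Matrix.mul_nonsing_inv _ hZdetU]
  have hpsd1 : ((1 : Matrix n n ℝ) - Z⁻¹).PosSemidef := by
    rw [h1Z]; exact psd_conj hZ1 hWH
  have hZinv_eq : Z⁻¹ = C * A⁻¹ * C := by
    rw [hZdef, Matrix.mul_inv_rev, Matrix.mul_inv_rev,
      Matrix.nonsing_inv_nonsing_inv _ hCdetU, Matrix.mul_assoc]
  have final : B⁻¹ - A⁻¹ = C⁻¹ * ((1 : Matrix n n ℝ) - Z⁻¹) * C⁻¹ := by
    rw [Matrix.mul_sub, Matrix.sub_mul, Matrix.mul_one, hZinv_eq]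
    congr 1
    · rw [← Matrix.mul_inv_rev, hCC]
    · simp [Matrix.mul_assoc, hc1, hc2, Matrix.mul_nonsing_inv _ hCdetU]
  rw [final]
  exact psd_conj hpsd1 hCiH

lemma det_prod_ineq {P Q Δ : Matrix n n ℝ} (hP : P.PosDef) (hQ : Q.PosDef) (hΔ : Δ.PosSemidef)
    (hPΔ : (P - Δ).PosDef) (hQP : (Q - P).PosSemidef) :
    (P - Δ).det * (Q + Δ).det ≤ P.det * Q.det := by
  have hPdetU : IsUnit P.det := isUnit_iff_ne_zero.mpr hP.det_pos.ne'
  have hQdetU : IsUnit Q.det := isUnit_iff_ne_zero.mpr hQ.det_pos.ne'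
  set R := hΔ.sqrt with hRdef
  have hRH : R.IsHermitian := hΔ.posSemidef_sqrt.isHermitian
  have hRR : R * R = Δ := hΔ.sqrt_mul_self
  have hPi : P⁻¹.PosDef := hP.inv
  set W := hPi.posSemidef.sqrt with hWdef
  have hWH : W.IsHermitian := hPi.posSemidef.posSemidef_sqrt.isHermitian
  have hWW : W * W = P⁻¹ := hPi.posSemidef.sqrt_mul_self
  have hWdetU : IsUnit W.det := sqrt_det_isUnit hPi
  have hp2 : ∀ X : Matrix n n ℝ, P * (P⁻¹ * X) = X := fun X => by
    rw [← Matrix.mul_assoc, Matrix.mul_nonsing_inv _ hPdetU, Matrix.one_mul]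
  have hq2 : ∀ X : Matrix n n ℝ, Q * (Q⁻¹ * X) = X := fun X => by
    rw [← Matrix.mul_assoc, Matrix.mul_nonsing_inv _ hQdetU, Matrix.one_mul]
  have eq1 : (P - Δ).det = P.det * (1 - R * P⁻¹ * R).det := by
    have hPfac : P - Δ = P * (1 + -(P⁻¹ * R) * R) := by
      rw [← hRR]
      simp [Matrix.mul_add, Matrix.mul_one, Matrix.mul_neg, Matrix.neg_mul, Matrix.mul_assoc,
        hp2, sub_eq_add_neg]
    rw [hPfac, det_mul, Matrix.det_one_add_mul_comm]
    congr 2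
    simp [Matrix.mul_neg, Matrix.neg_mul, Matrix.mul_assoc, sub_eq_add_neg]
  have eq2 : (Q + Δ).det = Q.det * (1 + R * Q⁻¹ * R).det := by
    have hQfac : Q + Δ = Q * (1 + Q⁻¹ * R * R) := by
      rw [← hRR]
      simp [Matrix.mul_add, Matrix.mul_one, Matrix.mul_assoc, hq2]
    rw [hQfac, det_mul, Matrix.det_one_add_mul_comm]
    congr 2
    simp [Matrix.mul_assoc]
  have eq3 : (1 - R * P⁻¹ * R).det = (1 - W * Δ * W).det := by
    have e3a : (1 : Matrix n n ℝ) - R * P⁻¹ * R = 1 + -(R * W) * (W * R) := by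
      rw [← hWW]
      simp [Matrix.mul_neg, Matrix.neg_mul, Matrix.mul_assoc, sub_eq_add_neg]
    have e3b : (1 : Matrix n n ℝ) + (W * R) * -(R * W) = 1 - W * Δ * W := by
      rw [← hRR]
      simp [Matrix.mul_neg, Matrix.neg_mul, Matrix.mul_assoc, sub_eq_add_neg]
    rw [e3a, Matrix.det_one_add_mul_comm, e3b]
  have eq4 : (1 + R * P⁻¹ * R).det = (1 + W * Δ * W).det := by
    have e4a : (1 : Matrix n n ℝ) + R * P⁻¹ * R = 1 + (R * W) * (W * R) := by
      rw [← hWW]; simp [Matrix.mul_assoc]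
    have e4b : (1 : Matrix n n ℝ) + (W * R) * (R * W) = 1 + W * Δ * W := by
      rw [← hRR]; simp [Matrix.mul_assoc]
    rw [e4a, Matrix.det_one_add_mul_comm, e4b]
  have hPeq : P = W⁻¹ * W⁻¹ := by
    rw [← Matrix.mul_inv_rev, hWW, Matrix.nonsing_inv_nonsing_inv _ hPdetU]
  have hX0eq : W * (P - Δ) * W = 1 - W * Δ * W := by
    rw [Matrix.mul_sub, Matrix.sub_mul]
    congr 1
    rw [hPeq, ← Matrix.mul_assoc, Matrix.mul_nonsing_inv _ hWdetU, Matrix.one_mul,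
      Matrix.nonsing_inv_mul _ hWdetU]
  have hX0 : (1 - W * Δ * W).PosDef := hX0eq ▸ posDef_conj hPΔ hWH hWdetU
  have hG : (W * Δ * W).PosSemidef := psd_conj hΔ hWH
  have hGH : (W * Δ * W).IsHermitian := hG.isHermitian
  set G := W * Δ * W with hGdef
  set T := hX0.posSemidef.sqrt with hTdef
  have hTH : T.IsHermitian := hX0.posSemidef.posSemidef_sqrt.isHermitian
  have hTT : T * T = 1 - G := hX0.posSemidef.sqrt_mul_self
  have hTdetU : IsUnit T.det := sqrt_det_isUnit hX0
  have hGeq : G = 1 - T * T := by rw [hTT]; abel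
  have hcommT : T * G = G * T := by rw [hGeq]; noncomm_ring
  have hkey : (1 : Matrix n n ℝ) - G * G = T * (1 + G) * T := by
    have h1 : T * (1 + G) * T = T * T + T * G * T := by noncomm_ring
    have h2 : T * G * T = G * (T * T) := by rw [hcommT, Matrix.mul_assoc]
    rw [h1, h2, hTT]
    noncomm_ring
  have h1G : ((1 : Matrix n n ℝ) + G).PosDef := Matrix.PosDef.one.add_posSemidef hG
  have hGG : ((1 : Matrix n n ℝ) - G * G).PosDef := hkey ▸ posDef_conj h1G hTH hTdetU
  have hGGpsd : (G * G).PosSemidef := by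
    have := Matrix.posSemidef_conjTranspose_mul_self G
    rwa [hGH.eq] at this
  have hstep4 : ((1 : Matrix n n ℝ) - G * G).det ≤ 1 := by
    have := det_le_det_add hGG hGGpsd
    rwa [sub_add_cancel, det_one] at this
  have hinv : (P⁻¹ - Q⁻¹).PosSemidef := inv_sub_inv_posSemidef hQ hP hQP
  have hdiff : (R * P⁻¹ * R - R * Q⁻¹ * R).PosSemidef := by
    have h := psd_conj hinv hRH
    have e : R * (P⁻¹ - Q⁻¹) * R = R * P⁻¹ * R - R * Q⁻¹ * R := by
      rw [Matrix.mul_sub, Matrix.sub_mul]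
    rwa [e] at h
  have h1GQ : ((1 : Matrix n n ℝ) + R * Q⁻¹ * R).PosDef :=
    Matrix.PosDef.one.add_posSemidef (psd_conj hQ.inv.posSemidef hRH)
  have hstep1 : ((1 : Matrix n n ℝ) + R * Q⁻¹ * R).det ≤ (1 + R * P⁻¹ * R).det := by
    have h := det_le_det_add h1GQ hdiff
    have e : (1 : Matrix n n ℝ) + R * Q⁻¹ * R + (R * P⁻¹ * R - R * Q⁻¹ * R)
        = 1 + R * P⁻¹ * R := by abel
    rwa [e] at h
  have hdm : 0 < (1 - R * P⁻¹ * R).det := by rw [eq3]; exact hX0.det_pos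
  have hprod : (1 - R * P⁻¹ * R).det * (1 + R * P⁻¹ * R).det = (1 - G * G).det := by
    rw [eq3, eq4, ← det_mul]
    congr 1
    noncomm_ring
  calc (P - Δ).det * (Q + Δ).det
      = (P.det * Q.det) * ((1 - R * P⁻¹ * R).det * (1 + R * Q⁻¹ * R).det) := by
        rw [eq1, eq2]; ring
    _ ≤ (P.det * Q.det) * ((1 - R * P⁻¹ * R).det * (1 + R * P⁻¹ * R).det) := by
        apply mul_le_mul_of_nonneg_left _ (mul_nonneg hP.det_pos.le hQ.det_pos.le)
        exact mul_le_mul_of_nonneg_left hstep1 hdm.le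
    _ = (P.det * Q.det) * (1 - G * G).det := by rw [hprod]
    _ ≤ (P.det * Q.det) * 1 := by
        apply mul_le_mul_of_nonneg_left hstep4 (mul_nonneg hP.det_pos.le hQ.det_pos.le)
    _ = P.det * Q.det := mul_one _

lemma inv_half {M : Matrix n n ℝ} (hM : M.PosDef) :
    ((1/2 : ℝ) • M)⁻¹ = (2 : ℝ) • M⁻¹ := by
  apply Matrix.inv_eq_right_inv
  rw [smul_mul_assoc, mul_smul_comm, smul_smul,
    Matrix.mul_nonsing_inv _ (isUnit_iff_ne_zero.mpr hM.det_pos.ne')]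
  norm_num

lemma real_glue (d : ℕ) (a b c e q1 q2 : ℝ) (ha : 0 < a) (hb : 0 < b) (hc : 0 < c) (he : 0 < e)
    (hdet : c * e ≤ b * a) (hq : q2 ≤ q1) :
    ((2:ℝ)^d * Real.pi ^ ((d:ℝ)/2) * b ^ ((1:ℝ)/2))⁻¹ *
      ((2 * Real.pi) ^ (-(d:ℝ)/2) * ((1/2:ℝ)^d * a) ^ (-(1:ℝ)/2) * Real.exp (-(1/2) * (2 * q1)))
    ≤ ((2:ℝ)^d * Real.pi ^ ((d:ℝ)/2) * c ^ ((1:ℝ)/2))⁻¹ *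
      ((2 * Real.pi) ^ (-(d:ℝ)/2) * ((1/2:ℝ)^d * e) ^ (-(1:ℝ)/2) * Real.exp (-(1/2) * (2 * q2))) := by
  have h2q : ∀ q : ℝ, -(1/2:ℝ) * (2*q) = -q := fun q => by ring
  rw [h2q, h2q]
  set K := ((2:ℝ)^d * Real.pi ^ ((d:ℝ)/2))⁻¹ * (2*Real.pi) ^ (-(d:ℝ)/2) *
    ((1/2:ℝ)^d) ^ (-(1:ℝ)/2) with hK
  have hKpos : 0 ≤ K := by
    rw [hK]
    have := Real.pi_pos
    positivity
  have key : ∀ (u v E : ℝ), 0 < u → 0 < v →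
      ((2:ℝ)^d * Real.pi ^ ((d:ℝ)/2) * u ^ ((1:ℝ)/2))⁻¹ *
        ((2 * Real.pi) ^ (-(d:ℝ)/2) * ((1/2:ℝ)^d * v) ^ (-(1:ℝ)/2) * E)
      = K * ((u*v) ^ (-(1:ℝ)/2) * E) := by
    intro u v E hu hv
    rw [hK, Real.mul_rpow (pow_nonneg (by norm_num) d) hv.le, Real.mul_rpow hu.le hv.le,
      show (-(1:ℝ)/2) = -(1/2) by norm_num, Real.rpow_neg hu.le]
    ring
  rw [key b a _ hb ha, key c e _ hc he]
  apply mul_le_mul_of_nonneg_left _ hKpos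
  apply mul_le_mul
  · exact Real.rpow_le_rpow_of_nonpos (by positivity) hdet (by norm_num)
  · exact Real.exp_le_exp.mpr (neg_le_neg hq)
  · exact (Real.exp_pos _).le
  · positivity

end Aux

/-- Nonnegativity of the expected look-ahead variance of Lemma 3.2: the second term
never exceeds the first. -/
theorem lemma_3_2_nonneg (d : ℕ) (V S Φ : Matrix (Fin d) (Fin d) ℝ)
    (hV : V.PosDef) (hS : S.PosDef) (hΦsymm : Φ.IsSymm) (hΦ : Φ.PosSemidef)
    (hSΦ : (S - Φ).PosSemidef) (y μ : Fin d → ℝ) :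
    ((2 : ℝ) ^ d * Real.pi ^ ((d : ℝ) / 2) * (V + S - Φ).det ^ ((1 : ℝ) / 2))⁻¹ *
        fN d ((1 / 2 : ℝ) • (V + S + Φ)) μ y ≤
      ((2 : ℝ) ^ d * Real.pi ^ ((d : ℝ) / 2) * V.det ^ ((1 : ℝ) / 2))⁻¹ *
        fN d ((1 / 2 : ℝ) • V + S) μ y := by
  have hC2eq : (1/2 : ℝ) • V + S = (1/2 : ℝ) • (V + S + S) := by module
  rw [hC2eq]
  set M1 := V + S + Φ with hM1def
  set P1 := V + S - Φ with hP1def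
  set N2 := V + S + S with hN2def
  have hM1 : M1.PosDef := (hV.add hS).add_posSemidef hΦ
  have hP1 : P1.PosDef := by
    rw [hP1def, add_sub_assoc]
    exact hV.add_posSemidef hSΦ
  have hN2 : N2.PosDef := (hV.add hS).add_posSemidef hS.posSemidef
  have hdet : V.det * N2.det ≤ P1.det * M1.det := by
    have e1 : P1 - (S - Φ) = V := by rw [hP1def]; abel
    have e2 : M1 + (S - Φ) = N2 := by rw [hM1def, hN2def]; abel
    have e3 : M1 - P1 = Φ + Φ := by rw [hM1def, hP1def]; abel
    have h := det_prod_ineq hP1 hM1 hSΦ (e1 ▸ hV) (e3 ▸ hΦ.add hΦ)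
    rwa [e1, e2] at h
  have hq : (y - μ) ⬝ᵥ (N2⁻¹ *ᵥ (y - μ)) ≤ (y - μ) ⬝ᵥ (M1⁻¹ *ᵥ (y - μ)) := by
    have hsub : (N2 - M1).PosSemidef := by
      have e : N2 - M1 = S - Φ := by rw [hN2def, hM1def]; abel
      rw [e]; exact hSΦ
    have hps := inv_sub_inv_posSemidef hN2 hM1 hsub
    have h0 := hps.dotProduct_mulVec_nonneg (y - μ)
    simp only [star_trivial] at h0
    rw [Matrix.sub_mulVec, dotProduct_sub] at h0
    linarith
  have hdet1 : ((1/2 : ℝ) • M1).det = (1/2 : ℝ)^d * M1.det := by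
    rw [Matrix.det_smul]
    simp
  have hdet2 : ((1/2 : ℝ) • N2).det = (1/2 : ℝ)^d * N2.det := by
    rw [Matrix.det_smul]
    simp
  simp only [fN, inv_half hM1, inv_half hN2, hdet1, hdet2, Matrix.smul_mulVec,
    dotProduct_smul, smul_eq_mul]
  exact real_glue d M1.det P1.det V.det N2.det _ _ hM1.det_pos hP1.det_pos hV.det_pos
    hN2.det_pos hdet hq
end
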